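/- Let (X,ρ) be a metric space and let P be an abstract porosity on X. If a set A ⊆ X is σ-P-porous at each of its points (i.e., for every x ∈ A there is r > 0 such that A ∩ B(x,r) is σ-P-porous), then A is σ-P-porous. -/

import Mathlib

open Metric Filter Set

/-- An abstract porosity on a metric space `X`: a relation between points and subsets
of `X` satisfying the axioms (A1), (A2), (A3). -/
structure AbstractPorosity (X : Type*) [MetricSpace X] where
  rel : X → Set X → Prop
  mono : ∀ (x : X) (A B : Set X), A ⊆ B → rel x B → rel x A
  loc : ∀ (x : X) (A : Set X), rel x A ↔ ∃ r > 0, rel x (A ∩ Metric.ball x r)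
  clos : ∀ (x : X) (A : Set X), rel x A ↔ rel x (closure A)

variable {X : Type*} [MetricSpace X]

/-- `A` is `P`-porous if `P(x,A)` holds at each point `x ∈ A`. -/
def AbstractPorosity.Porous (P : AbstractPorosity X) (A : Set X) : Prop :=
  ∀ x ∈ A, P.rel x A

/-- `A` is σ-`P`-porous if it is a countable union of `P`-porous sets. -/
def AbstractPorosity.SigmaPorous (P : AbstractPorosity X) (A : Set X) : Prop :=
  ∃ f : ℕ → Set X, (∀ n, P.Porous (f n)) ∧ A = ⋃ n, f n

/-- `A` is σ-`P`-porous at `x` if some `A ∩ B(x,r)` (r>0) is σ-`P`-porous. -/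
def AbstractPorosity.SigmaPorousAt (P : AbstractPorosity X) (A : Set X) (x : X) : Prop :=
  ∃ r > 0, P.SigmaPorous (A ∩ Metric.ball x r)

/-- The kernel `K_P(A)`: points of `A` at which `A` is not σ-`P`-porous. -/
def AbstractPorosity.kernel (P : AbstractPorosity X) (A : Set X) : Set X :=
  {x ∈ A | ¬ P.SigmaPorousAt A x}

/-- σ-porous sets are hereditary. -/
lemma sigmaPorous_mono {P : AbstractPorosity X} {A B : Set X}
    (hB : P.SigmaPorous B) (hAB : A ⊆ B) : P.SigmaPorous A := by
  obtain ⟨f, hf, rfl⟩ := hB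
  refine ⟨fun n => A ∩ f n, fun n x hx => P.mono x _ (f n) inter_subset_right (hf n x hx.2), ?_⟩
  rw [← inter_iUnion]
  exact (inter_eq_left.mpr hAB).symm

/-- If `E` is σ-porous within a ball of a *uniform* radius `r` around every point,
then `E` is σ-porous.  This is proved by a Stone-type σ-discrete decomposition. -/
lemma sigmaPorous_uniform (P : AbstractPorosity X) (E : Set X) (r : ℝ) (hr : 0 < r)
    (h : ∀ x ∈ E, P.SigmaPorous (E ∩ ball x r)) : P.SigmaPorous E := by
  classical
  have wf : WellFounded (WellOrderingRel (α := X)) := IsWellFounded.wf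
  set S : X → Set X := fun c => {x | x ∈ E ∧ dist c x < r} with hSdef
  have hSne : ∀ c, c ∈ E → (S c).Nonempty := fun c hc => ⟨c, hc, by simpa using hr⟩
  set α : X → X := fun c => if hc : c ∈ E then wf.min (S c) (hSne c hc) else c with hαdef
  have hα1 : ∀ c ∈ E, α c ∈ E ∧ dist c (α c) < r := by
    intro c hc
    have := wf.min_mem (S c) (hSne c hc)
    simp only [hαdef, dif_pos hc]
    exact this
  have hα2 : ∀ c ∈ E, ∀ x ∈ E, WellOrderingRel x (α c) → ¬ dist c x < r := by
    intro c hc x hx hlt hd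
    have : x ∈ S c := ⟨hx, hd⟩
    have := wf.not_lt_min (S c) this
    rw [hαdef] at hlt
    simp only [dif_pos hc] at hlt
    exact this hlt
  set ε : ℕ → ℝ := fun n => (1 / 2 : ℝ) ^ n with hεdef
  have hεpos : ∀ n, 0 < ε n := fun n => by positivity
  set C : ℕ → Set X := fun n => {c | c ∈ E ∧ dist c (α c) ≤ r - 3 * ε n} with hCdef
  -- the separation property of centers assigned to distinct points
  have keyhalf : ∀ n (c c' : X), c ∈ C n → c' ∈ C n →
      WellOrderingRel (α c) (α c') → 3 * ε n ≤ dist c c' := by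
    intro n c c' hc hc' hlt
    have hcE := hc.1
    have hc'E := hc'.1
    have hαcE : α c ∈ E := (hα1 c hcE).1
    have hge : ¬ dist c' (α c) < r := hα2 c' hc'E (α c) hαcE hlt
    push_neg at hge
    have htri : dist c' (α c) ≤ dist c' c + dist c (α c) := dist_triangle _ _ _
    have h1 : dist c (α c) ≤ r - 3 * ε n := hc.2
    have h2 : dist c c' = dist c' c := dist_comm _ _
    linarith
  have key : ∀ n (c c' : X), c ∈ C n → c' ∈ C n → α c ≠ α c' → 3 * ε n ≤ dist c c' := by
    intro n c c' hc hc' hne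
    rcases @trichotomous X WellOrderingRel _ (α c) (α c') with hlt | heq | hgt
    · exact keyhalf n c c' hc hc' hlt
    · exact absurd heq hne
    · rw [dist_comm]; exact keyhalf n c' c hc' hc hgt
  set V : X → ℕ → Set X := fun x n => {z | ∃ c, c ∈ C n ∧ α c = x ∧ dist z c < ε n} with hVdef
  -- separation of the level-n pieces
  have sep : ∀ n (x x' z w : X), x ≠ x' → z ∈ V x n → w ∈ V x' n → ε n < dist z w := by
    intro n x x' z w hne hz hw
    obtain ⟨c, hc, hcx, hzc⟩ := hz
    obtain ⟨c', hc', hcx', hwc'⟩ := hw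
    have h3 : 3 * ε n ≤ dist c c' := key n c c' hc hc' (by rw [hcx, hcx']; exact hne)
    have htri : dist c c' ≤ dist c z + dist z w + dist w c' := dist_triangle4 _ _ _ _
    have e1 : dist c z = dist z c := dist_comm _ _
    have e2 : dist w c' < ε n := hwc'
    linarith
  set Pc : X → ℕ → Set X := fun x n => E ∩ V x n with hPdef
  have hPsub : ∀ x n, x ∈ E → Pc x n ⊆ E ∩ ball x r := by
    intro x n hx z hz
    obtain ⟨hzE, c, hc, hcx, hzc⟩ := hz
    refine ⟨hzE, ?_⟩
    have h1 : dist c (α c) ≤ r - 3 * ε n := hc.2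
    rw [hcx] at h1
    have htri : dist z x ≤ dist z c + dist c x := dist_triangle _ _ _
    have hε := hεpos n
    simp only [mem_ball]
    linarith
  have hPempty : ∀ x n, x ∉ E → Pc x n = ∅ := by
    intro x n hx
    ext z
    simp only [hPdef, mem_inter_iff, mem_empty_iff_false, iff_false]
    rintro ⟨-, c, hc, hcx, -⟩
    exact hx (hcx ▸ (hα1 c hc.1).1)
  have hPsp : ∀ x n, P.SigmaPorous (Pc x n) := by
    intro x n
    by_cases hx : x ∈ E
    · exact sigmaPorous_mono (h x hx) (hPsub x n hx)
    · rw [hPempty x n hx]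
      exact ⟨fun _ => ∅, fun n z hz => absurd hz (notMem_empty z), by simp⟩
  choose g hg1 hg2 using hPsp
  set R : ℕ → ℕ → Set X := fun n m => ⋃ x, g x n m with hRdef
  have hgsubV : ∀ x n m, g x n m ⊆ V x n := by
    intro x n m z hz
    have : z ∈ Pc x n := by rw [hg2 x n]; exact mem_iUnion.2 ⟨m, hz⟩
    exact this.2
  have hgsubE : ∀ x n m, g x n m ⊆ E := by
    intro x n m z hz
    have : z ∈ Pc x n := by rw [hg2 x n]; exact mem_iUnion.2 ⟨m, hz⟩
    exact this.1
  have hRporous : ∀ n m, P.Porous (R n m) := by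
    intro n m z hz
    obtain ⟨x, hzx⟩ := mem_iUnion.1 hz
    have hrel : P.rel z (g x n m) := hg1 x n m z hzx
    have hsub : R n m ∩ ball z (ε n) ⊆ g x n m := by
      rintro w ⟨hwR, hwb⟩
      obtain ⟨x', hwx'⟩ := mem_iUnion.1 hwR
      by_cases hxx : x = x'
      · exact hxx ▸ hwx'
      · have := sep n x x' z w hxx (hgsubV x n m hzx) (hgsubV x' n m hwx')
        rw [mem_ball, dist_comm] at hwb
        linarith
    exact (P.loc z (R n m)).2 ⟨ε n, hεpos n, P.mono z _ _ hsub hrel⟩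
  have hcover : E = ⋃ n, ⋃ m, R n m := by
    ext z
    constructor
    · intro hz
      have hd : dist z (α z) < r := (hα1 z hz).2
      obtain ⟨n, hn⟩ : ∃ n : ℕ, (1 / 2 : ℝ) ^ n < (r - dist z (α z)) / 3 :=
        exists_pow_lt_of_lt_one (by linarith) (by norm_num)
      have hzC : z ∈ C n := by
        refine ⟨hz, ?_⟩
        have hεn : ε n = (1 / 2 : ℝ) ^ n := rfl
        rw [hεn]
        linarith
      have hzV : z ∈ V (α z) n := ⟨z, hzC, rfl, by simpa using hεpos n⟩
      have hzP : z ∈ Pc (α z) n := ⟨hz, hzV⟩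
      rw [hg2 (α z) n] at hzP
      obtain ⟨m, hm⟩ := mem_iUnion.1 hzP
      exact mem_iUnion.2 ⟨n, mem_iUnion.2 ⟨m, mem_iUnion.2 ⟨α z, hm⟩⟩⟩
    · intro hz
      obtain ⟨n, hn⟩ := mem_iUnion.1 hz
      obtain ⟨m, hm⟩ := mem_iUnion.1 hn
      obtain ⟨x, hx⟩ := mem_iUnion.1 hm
      exact hgsubE x n m hx
  refine ⟨fun k => R (Nat.unpair k).1 (Nat.unpair k).2, fun k => hRporous _ _, ?_⟩
  rw [hcover]
  ext z
  simp only [mem_iUnion]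
  constructor
  · rintro ⟨n, m, hm⟩
    exact ⟨Nat.pair n m, by simpa [Nat.unpair_pair] using hm⟩
  · rintro ⟨k, hk⟩
    exact ⟨(Nat.unpair k).1, (Nat.unpair k).2, hk⟩

/-- If `A` is σ-`P`-porous at each of its points, then `A` is σ-`P`-porous. -/
theorem sigmaPorous_of_forall_sigmaPorousAt {X : Type*} [MetricSpace X]
    (P : AbstractPorosity X) (A : Set X) (h : ∀ x ∈ A, P.SigmaPorousAt A x) :
    P.SigmaPorous A := by
  classical
  set Ak : ℕ → Set X := fun k => {x | x ∈ A ∧ P.SigmaPorous (A ∩ ball x (1 / (k + 1)))}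
    with hAkdef
  have hAksp : ∀ k, P.SigmaPorous (Ak k) := by
    intro k
    refine sigmaPorous_uniform P (Ak k) (1 / (k + 1)) (by positivity) ?_
    intro x hx
    exact sigmaPorous_mono hx.2 (inter_subset_inter_left _ (fun y hy => hy.1))
  have hcover : A = ⋃ k, Ak k := by
    ext x
    constructor
    · intro hx
      obtain ⟨r, hr, hsp⟩ := h x hx
      obtain ⟨k, hk⟩ : ∃ k : ℕ, 1 / ((k : ℝ) + 1) < r := exists_nat_one_div_lt hr
      exact mem_iUnion.2 ⟨k, hx,
        sigmaPorous_mono hsp (inter_subset_inter_right _ (ball_subset_ball hk.le))⟩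
    · intro hx
      obtain ⟨k, hk⟩ := mem_iUnion.1 hx
      exact hk.1
  choose g hg1 hg2 using hAksp
  refine ⟨fun m => g (Nat.unpair m).1 (Nat.unpair m).2, fun m => hg1 _ _, ?_⟩
  rw [hcover]
  ext z
  simp only [mem_iUnion]
  constructor
  · rintro ⟨k, hz⟩
    rw [hg2 k] at hz
    obtain ⟨m, hm⟩ := mem_iUnion.1 hz
    exact ⟨Nat.pair k m, by simpa [Nat.unpair_pair] using hm⟩
  · rintro ⟨m, hm⟩
    refine ⟨(Nat.unpair m).1, ?_⟩
    rw [hg2]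
    exact mem_iUnion.2 ⟨_, hm⟩
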